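/- Define G(γ, d) = −2πγ − γ(arcsin γ − arcsin(γ/d)) + √(d²−γ²) − √(1−γ²) + (d−1). For every d > 1 one has G(0, d) = 2(d−1) > 0, and G(1, d) = −5π/2 + arcsin(1/d) + √(d²−1) + d − 1. Consequently, for every d with 1 < d < d̂ (where d̂ is the unique zero of d ↦ −5π/2 + arcsin(1/d) + √(d²−1) + d − 1 on (1,∞)) one has G(1, d) < 0, and hence there exists γ_max(d) ∈ (0, 1) with G(γ_max(d), d) = 0. -/
import Mathlib


open Real Filter Topology

/-- `G(γ, d) = −2πγ − γ(arcsin γ − arcsin(γ/d)) + √(d²−γ²) − √(1−γ²) + (d−1)`,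
whose zero in `γ` defines the critical current `γ_max(d)` of a microresonator. -/
noncomputable def Gfun (γ d : ℝ) : ℝ :=
  -(2 * π * γ) - γ * (Real.arcsin γ - Real.arcsin (γ / d)) +
    Real.sqrt (d ^ 2 - γ ^ 2) - Real.sqrt (1 - γ ^ 2) + (d - 1)

/-- `g(d) = −5π/2 + arcsin(1/d) + √(d²−1) + d − 1`. -/
noncomputable def gfun (d : ℝ) : ℝ :=
  -(5 * π / 2) + Real.arcsin (1 / d) + Real.sqrt (d ^ 2 - 1) + d - 1

lemma Gfun_zero (d : ℝ) (hd : 1 < d) : Gfun 0 d = 2 * (d - 1) := by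
  have h0 : (0:ℝ) ≤ d := by linarith
  simp [Gfun, Real.sqrt_sq h0]
  ring

lemma Gfun_one (d : ℝ) (hd : 1 < d) : Gfun 1 d = gfun d := by
  simp [Gfun, gfun, Real.arcsin_one]
  ring

lemma gfun_one : gfun 1 = -(2 * π) := by
  simp [gfun, Real.arcsin_one]
  ring

lemma gfun_cont (a : ℝ) (ha : (1:ℝ) ≤ a) : ContinuousOn gfun (Set.Icc 1 a) := by
  have h1 : ContinuousOn (fun d : ℝ => Real.arcsin (1 / d)) (Set.Icc 1 a) := by
    apply Real.continuous_arcsin.comp_continuousOn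
    apply ContinuousOn.div continuousOn_const continuousOn_id
    intro x hx h
    simp only [id] at h
    have := hx.1; rw [h] at this; linarith
  have h2 : Continuous fun d : ℝ => Real.sqrt (d ^ 2 - 1) :=
    Real.continuous_sqrt.comp (by continuity)
  unfold gfun
  exact (((continuousOn_const.add h1).add h2.continuousOn).add continuousOn_id).sub
    continuousOn_const

lemma Gfun_cont (d : ℝ) (hd : d ≠ 0) : Continuous (fun γ => Gfun γ d) := by
  unfold Gfun
  have h1 : Continuous fun γ : ℝ => Real.arcsin (γ / d) :=
    Real.continuous_arcsin.comp (continuous_id.div_const d)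
  have h2 : Continuous fun γ : ℝ => Real.sqrt (d ^ 2 - γ ^ 2) :=
    Real.continuous_sqrt.comp (by continuity)
  have h3 : Continuous fun γ : ℝ => Real.sqrt (1 - γ ^ 2) :=
    Real.continuous_sqrt.comp (by continuity)
  continuity

/-- For every `d > 1`: `G(0, d) = 2(d−1) > 0` and `G(1, d) = g(d)`. Consequently, if
`d̂` is the unique zero of `g` on `(1,∞)`, then for every `d` with `1 < d < d̂` one has
`G(1, d) < 0`, and hence there exists `γ_max(d) ∈ (0,1)` with `G(γ_max(d), d) = 0`. -/
theorem stmt17 :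
    (∀ d : ℝ, 1 < d →
      Gfun 0 d = 2 * (d - 1) ∧ 0 < Gfun 0 d ∧ Gfun 1 d = gfun d) ∧
    (∀ dhat : ℝ, 1 < dhat → gfun dhat = 0 →
      (∀ d' : ℝ, 1 < d' → gfun d' = 0 → d' = dhat) →
      ∀ d : ℝ, 1 < d → d < dhat →
        Gfun 1 d < 0 ∧ ∃ γmax ∈ Set.Ioo (0 : ℝ) 1, Gfun γmax d = 0) := by
  constructor
  · intro d hd
    refine ⟨Gfun_zero d hd, ?_, Gfun_one d hd⟩
    rw [Gfun_zero d hd]; linarith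
  · intro dhat hdhat hz huniq d hd hdd
    have hG1 : Gfun 1 d < 0 := by
      rw [Gfun_one d hd]
      -- show gfun d < 0
      by_contra h
      push_neg at h
      rcases lt_or_eq_of_le h with hpos | heq
      · -- gfun 1 < 0 < gfun d, IVT gives zero in (1,d)
        have hiv : Set.Ioo (gfun 1) (gfun d) ⊆ gfun '' Set.Ioo 1 d :=
          intermediate_value_Ioo (le_of_lt hd) (gfun_cont d (le_of_lt hd))
        have hpi : (0:ℝ) ∈ Set.Ioo (gfun 1) (gfun d) := by
          constructor
          · rw [gfun_one]; have := Real.pi_pos; linarith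
          · exact hpos
        obtain ⟨d', hd', hgd'⟩ := hiv hpi
        have := huniq d' hd'.1 hgd'
        linarith [hd'.2]
      · have := huniq d hd heq.symm
        linarith
    refine ⟨hG1, ?_⟩
    have hG0 : 0 < Gfun 0 d := by rw [Gfun_zero d hd]; linarith
    have hiv : Set.Ioo (Gfun 1 d) (Gfun 0 d) ⊆ (fun γ => Gfun γ d) '' Set.Ioo 0 1 :=
      intermediate_value_Ioo' (by norm_num) (Gfun_cont d (by linarith)).continuousOn
    obtain ⟨γ, hγ, hGγ⟩ := hiv ⟨hG1, hG0⟩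
    exact ⟨γ, hγ, hGγ⟩
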